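/- Quantitative uniform estimate: for f ∈ C([a,b],[0,1]) and positive null sequences δ_n, Δ_n with 1/(nδ_n) → 0 and 1/(nΔ_n) → 0, one has ‖D_n^{(m)}(f) − f‖_∞ ≤ (ω(f,Δ_n)/𝒜)(‖χ‖₁ + M̃₁(χ)/(nΔ_n)) + max( m_{1+α}(φ_σ)/(φ_σ(2)(nδ_n)^{1+α}), ω(f,δ_n) ), where ω(f,δ) is the modulus of continuity of f on [a,b]. -/

import Mathlib

open MeasureTheory

/-- The kernel `φ_σ` built from a sigmoidal function `σ`. -/
noncomputable def phiSigma (σ : ℝ → ℝ) (x : ℝ) : ℝ := (σ (x + 1) - σ (x - 1)) / 2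

/-- The Durrmeyer-type max-min neural network operator `D_n^{(m)}`. -/
noncomputable def Dmm (χ σ : ℝ → ℝ) (a b : ℤ) (n : ℕ) (f : ℝ → ℝ) (x : ℝ) : ℝ :=
  sSup ((fun k : ℤ =>
      min ((∫ t in (a:ℝ)..(b:ℝ), χ ((n : ℝ) * t - (k : ℝ)) * f t) /
            (∫ t in (a:ℝ)..(b:ℝ), χ ((n : ℝ) * t - (k : ℝ))))
        (phiSigma σ ((n : ℝ) * x - (k : ℝ)) /
          sSup ((fun d : ℤ => phiSigma σ ((n : ℝ) * x - (d : ℝ))) ''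
            Set.Icc ((n : ℤ) * a) ((n : ℤ) * b - 1)))) ''
    Set.Icc ((n : ℤ) * a) ((n : ℤ) * b - 1))



section Aux
variable {σ : ℝ → ℝ}

lemma sigma_neg (hodd : ∀ x : ℝ, σ (-x) - 1/2 = -(σ x - 1/2)) (x : ℝ) :
    σ (-x) = 1 - σ x := by have := hodd x; linarith

lemma sigma_zero (hodd : ∀ x : ℝ, σ (-x) - 1/2 = -(σ x - 1/2)) : σ 0 = 1/2 := by
  have := hodd 0; norm_num at this; linarith

lemma concave_inc (hconc : ConcaveOn ℝ (Set.Ici 0) σ) {p q L : ℝ}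
    (hp : 0 ≤ p) (hpq : p ≤ q) (hL : 0 ≤ L) :
    σ (q + L) - σ q ≤ σ (p + L) - σ p := by
  rcases eq_or_lt_of_le hL with h | hL'
  · simp [← h]
  rcases eq_or_lt_of_le hpq with h | hpq'
  · simp [h]
  set D := q + L - p with hD
  have hDpos : 0 < D := by simp only [hD]; linarith
  have hu : p ∈ Set.Ici (0:ℝ) := hp
  have hv : (q + L) ∈ Set.Ici (0:ℝ) := by simp only [Set.mem_Ici]; linarith
  have ha : (0:ℝ) ≤ (q - p)/D := div_nonneg (by linarith) hDpos.le
  have hb : (0:ℝ) ≤ L/D := div_nonneg hL hDpos.le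
  have hsum : (q - p)/D + L/D = 1 := by
    rw [← add_div, show q - p + L = D by rw [hD]; ring, div_self hDpos.ne']
  have h1 := hconc.2 hu hv ha hb hsum
  have h2 := hconc.2 hu hv hb ha (by linarith)
  simp only [smul_eq_mul] at h1 h2
  have e1 : (q - p)/D * p + L/D * (q + L) = p + L := by field_simp; ring
  have e2 : L/D * p + (q - p)/D * (q + L) = q := by field_simp; ring
  rw [e1] at h1; rw [e2] at h2
  have h3 : (q - p)/D * σ p + L/D * σ p = σ p := by rw [← add_mul, hsum, one_mul]
  have h4 : (q - p)/D * σ (q + L) + L/D * σ (q + L) = σ (q + L) := by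
    rw [← add_mul, hsum, one_mul]
  linarith

lemma phi_even (hodd : ∀ x : ℝ, σ (-x) - 1/2 = -(σ x - 1/2)) (y : ℝ) :
    phiSigma σ (-y) = phiSigma σ y := by
  unfold phiSigma
  rw [show -y + 1 = -(y - 1) by ring, show -y - 1 = -(y + 1) by ring,
    sigma_neg hodd, sigma_neg hodd]
  ring

lemma phi_nonneg (hmono : Monotone σ) (y : ℝ) : 0 ≤ phiSigma σ y := by
  unfold phiSigma
  have := hmono (show y - 1 ≤ y + 1 by linarith)
  linarith

lemma phi_anti (hconc : ConcaveOn ℝ (Set.Ici 0) σ)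
    (hodd : ∀ x : ℝ, σ (-x) - 1/2 = -(σ x - 1/2)) {y y' : ℝ}
    (hy : 0 ≤ y) (hyy : y ≤ y') : phiSigma σ y' ≤ phiSigma σ y := by
  have hy' : 0 ≤ y' := le_trans hy hyy
  have hrep : ∀ z : ℝ, σ (z - 1) = 1 - σ (1 - z) := by
    intro z
    have := sigma_neg hodd (1 - z)
    rw [show -(1 - z) = z - 1 by ring] at this
    linarith
  unfold phiSigma
  rcases le_or_gt y' 1 with h1 | h1
  · have key := concave_inc hconc (p := 1 - y') (q := y + 1) (L := y' - y)
      (by linarith) (by linarith) (by linarith)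
    rw [show 1 - y' + (y' - y) = 1 - y by ring,
      show y + 1 + (y' - y) = y' + 1 by ring] at key
    rw [hrep y, hrep y']
    linarith
  · rcases le_or_gt 1 y with h2 | h2
    · have key := concave_inc hconc (p := y - 1) (q := y' - 1) (L := 2)
        (by linarith) (by linarith) (by norm_num)
      rw [show y' - 1 + 2 = y' + 1 by ring, show y - 1 + 2 = y + 1 by ring] at key
      linarith
    · have key1 := concave_inc hconc (p := 0) (q := y + 1) (L := 1 - y)
        le_rfl (by linarith) (by linarith)
      have key2 := concave_inc hconc (p := 0) (q := 2) (L := y' - 1)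
        le_rfl (by norm_num) (by linarith)
      rw [show y + 1 + (1 - y) = 2 by ring, show (0:ℝ) + (1 - y) = 1 - y by ring] at key1
      rw [show (2:ℝ) + (y' - 1) = y' + 1 by ring, show (0:ℝ) + (y' - 1) = y' - 1 by ring] at key2
      have h0 := sigma_zero hodd
      rw [hrep y]
      linarith

lemma phi_abs (hodd : ∀ x : ℝ, σ (-x) - 1/2 = -(σ x - 1/2)) (y : ℝ) :
    phiSigma σ y = phiSigma σ |y| := by
  rcases abs_cases y with ⟨h, _⟩ | ⟨h, _⟩
  · rw [h]
  · rw [h, phi_even hodd]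

lemma phi_ge_two (hconc : ConcaveOn ℝ (Set.Ici 0) σ)
    (hodd : ∀ x : ℝ, σ (-x) - 1/2 = -(σ x - 1/2)) {y : ℝ} (h : |y| ≤ 2) :
    phiSigma σ 2 ≤ phiSigma σ y := by
  rw [phi_abs hodd y]
  exact phi_anti hconc hodd (abs_nonneg y) h

lemma phi_le_two (hconc : ConcaveOn ℝ (Set.Ici 0) σ)
    (hodd : ∀ x : ℝ, σ (-x) - 1/2 = -(σ x - 1/2)) {y : ℝ} (h : 2 ≤ |y|) :
    phiSigma σ y ≤ phiSigma σ 2 := by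
  rw [phi_abs hodd y]
  exact phi_anti hconc hodd (by norm_num) h

lemma phi_two_pos (h31 : σ 1 < σ 3) : 0 < phiSigma σ 2 := by
  unfold phiSigma
  norm_num
  linarith

end Aux


section Omega
variable {A B : ℝ} {f : ℝ → ℝ} {ω : ℝ → ℝ}

lemma omega_mem_le (hf01 : ∀ t ∈ Set.Icc A B, f t ∈ Set.Icc (0:ℝ) 1)
    (hω : ∀ δ : ℝ, ω δ = sSup {v : ℝ | ∃ x ∈ Set.Icc A B, ∃ y ∈ Set.Icc A B,
        |x - y| ≤ δ ∧ v = |f x - f y|})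
    {u v d : ℝ} (hu : u ∈ Set.Icc A B) (hv : v ∈ Set.Icc A B)
    (hd : |u - v| ≤ d) : |f u - f v| ≤ ω d := by
  rw [hω]
  apply le_csSup
  · refine ⟨1, ?_⟩
    rintro w ⟨x, hx, y, hy, -, rfl⟩
    have h1 := hf01 x hx; have h2 := hf01 y hy
    simp only [Set.mem_Icc] at h1 h2
    rw [abs_le]; constructor <;> linarith
  · exact ⟨u, hu, v, hv, hd, rfl⟩

lemma omega_nonneg (hAB : A ≤ B)
    (hf01 : ∀ t ∈ Set.Icc A B, f t ∈ Set.Icc (0:ℝ) 1)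
    (hω : ∀ δ : ℝ, ω δ = sSup {v : ℝ | ∃ x ∈ Set.Icc A B, ∃ y ∈ Set.Icc A B,
        |x - y| ≤ δ ∧ v = |f x - f y|})
    {d : ℝ} (hd : 0 ≤ d) : 0 ≤ ω d := by
  have h := omega_mem_le hf01 hω (u := A) (v := A)
    (Set.left_mem_Icc.2 hAB) (Set.left_mem_Icc.2 hAB) (by simpa using hd)
  exact le_trans (abs_nonneg _) h

lemma omega_chain (hAB : A ≤ B)
    (hf01 : ∀ t ∈ Set.Icc A B, f t ∈ Set.Icc (0:ℝ) 1)
    (hω : ∀ δ : ℝ, ω δ = sSup {v : ℝ | ∃ x ∈ Set.Icc A B, ∃ y ∈ Set.Icc A B,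
        |x - y| ≤ δ ∧ v = |f x - f y|})
    {u v d : ℝ} (hu : u ∈ Set.Icc A B) (hv : v ∈ Set.Icc A B) (hd : 0 < d) :
    |f u - f v| ≤ (1 + |u - v|/d) * ω d := by
  have hω0 : 0 ≤ ω d := omega_nonneg hAB hf01 hω hd.le
  have key : ∀ N : ℕ, ∀ u v : ℝ, u ∈ Set.Icc A B → v ∈ Set.Icc A B →
      |u - v| ≤ N * d → |f u - f v| ≤ N * ω d := by
    intro N
    induction N with
    | zero =>
      intro u v hu hv h
      simp only [Nat.cast_zero, zero_mul] at h ⊢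
      have : u = v := by
        have := abs_nonneg (u - v)
        have h2 : |u - v| = 0 := le_antisymm h this
        have := abs_eq_zero.mp h2
        linarith
      simp [this]
    | succ N ih =>
      intro u v hu hv h
      push_cast at h
      set θ : ℝ := (N : ℝ)/(N + 1) with hθdef
      have hN1 : (0:ℝ) < (N:ℝ) + 1 := by positivity
      have hθ0 : 0 ≤ θ := by positivity
      have hθ1 : θ ≤ 1 := by
        rw [hθdef, div_le_one hN1]; linarith
      set w : ℝ := u + θ * (v - u) with hwdef
      have hw : w ∈ Set.Icc A B := by
        have := (convex_Icc A B) hu hv (by linarith : (0:ℝ) ≤ 1 - θ) hθ0 (by ring)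
        simpa [hwdef, smul_eq_mul, show (1 - θ) * u + θ * v = u + θ * (v - u) by ring]
          using this
      have huw : |u - w| ≤ N * d := by
        have : u - w = -(θ * (v - u)) := by rw [hwdef]; ring
        rw [this, abs_neg, abs_mul, abs_of_nonneg hθ0]
        calc θ * |v - u| ≤ θ * ((N + 1) * d) := by
              apply mul_le_mul_of_nonneg_left _ hθ0
              rwa [abs_sub_comm] at h
          _ = (N : ℝ) * d := by
              rw [hθdef]; field_simp
      have hwv : |w - v| ≤ d := by
        have : w - v = (1 - θ) * (u - v) := by rw [hwdef]; ring
        rw [this, abs_mul, abs_of_nonneg (by linarith : (0:ℝ) ≤ 1 - θ)]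
        have h1θ : 1 - θ = 1 / ((N:ℝ) + 1) := by rw [hθdef]; field_simp; ring
        calc (1 - θ) * |u - v| ≤ (1 - θ) * ((N + 1) * d) := by
              apply mul_le_mul_of_nonneg_left h (by linarith)
          _ = d := by rw [h1θ]; field_simp
      calc |f u - f v| ≤ |f u - f w| + |f w - f v| := by
            have : f u - f v = (f u - f w) + (f w - f v) := by ring
            rw [this]; exact abs_add_le _ _
        _ ≤ N * ω d + ω d := add_le_add (ih u w hu hw huw) (omega_mem_le hf01 hω hw hv hwv)
        _ = (N + 1 : ℕ) * ω d := by push_cast; ring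
  set N : ℕ := ⌈|u - v| / d⌉₊ with hNdef
  have h1 : |u - v| ≤ N * d := by
    rw [← div_le_iff₀ hd]
    exact Nat.le_ceil _
  have h2 : (N : ℝ) ≤ 1 + |u - v| / d := by
    have := Nat.ceil_lt_add_one (show (0:ℝ) ≤ |u - v| / d by positivity)
    rw [hNdef]; push_cast at this ⊢; linarith
  calc |f u - f v| ≤ N * ω d := key N u v hu hv h1
    _ ≤ (1 + |u - v|/d) * ω d := mul_le_mul_of_nonneg_right h2 hω0

end Omega

lemma near_bound (χ : ℝ → ℝ)
    (hχ0 : ∀ t, 0 ≤ χ t) (hχbdd : ∃ M, ∀ t, χ t ≤ M) (hχint : Integrable χ)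
    (hA : 0 < ∫ u in (0:ℝ)..1, χ u)
    (hM1 : Integrable (fun u : ℝ => χ u * |u|))
    (a b : ℤ) (hab : a < b) (f : ℝ → ℝ)
    (hcont : ContinuousOn f (Set.Icc (a:ℝ) (b:ℝ)))
    (hf01 : ∀ t ∈ Set.Icc (a:ℝ) (b:ℝ), f t ∈ Set.Icc (0:ℝ) 1)
    (ω : ℝ → ℝ)
    (hω : ∀ δ : ℝ, ω δ = sSup {v : ℝ | ∃ x ∈ Set.Icc (a:ℝ) (b:ℝ), ∃ y ∈ Set.Icc (a:ℝ) (b:ℝ),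
        |x - y| ≤ δ ∧ v = |f x - f y|})
    (n : ℕ) (hn : 0 < n) (Δ δ : ℝ) (hΔ : 0 < Δ) (hδ : 0 < δ)
    (x : ℝ) (hx : x ∈ Set.Icc (a:ℝ) (b:ℝ)) (k : ℤ)
    (hk : k ∈ Set.Icc ((n:ℤ) * a) ((n:ℤ) * b - 1))
    (hnear : |(n:ℝ) * x - (k:ℝ)| ≤ (n:ℝ) * δ) :
    |(∫ t in (a:ℝ)..(b:ℝ), χ ((n:ℝ) * t - (k:ℝ)) * f t) /
        (∫ t in (a:ℝ)..(b:ℝ), χ ((n:ℝ) * t - (k:ℝ))) - f x|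
      ≤ (ω Δ / ∫ u in (0:ℝ)..1, χ u) *
          ((∫ u : ℝ, χ u) + (∫ u : ℝ, χ u * |u|) / ((n:ℝ) * Δ)) + ω δ := by
  obtain ⟨M, hM⟩ := hχbdd
  have hab' : (a:ℝ) ≤ (b:ℝ) := by exact_mod_cast hab.le
  have hnn : (0:ℝ) < (n:ℝ) := by exact_mod_cast hn
  set nn : ℝ := (n : ℝ) with hnndef
  set c : ℝ := (k : ℝ) with hcdef
  set A0 : ℝ := ∫ u in (0:ℝ)..1, χ u with hA0def
  set K1 : ℝ := ∫ u : ℝ, χ u with hK1def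
  set K2 : ℝ := ∫ u : ℝ, χ u * |u| with hK2def
  have hK10 : 0 ≤ K1 := integral_nonneg hχ0
  have hK20 : 0 ≤ K2 := integral_nonneg (fun u => mul_nonneg (hχ0 u) (abs_nonneg u))
  set C : ℝ := K1 + K2 / (nn * Δ) with hCdef
  have hC0 : 0 ≤ C := add_nonneg hK10 (div_nonneg hK20 (by positivity))
  have hωΔ0 : 0 ≤ ω Δ := omega_nonneg hab' hf01 hω hΔ.le
  have hωδ0 : 0 ≤ ω δ := omega_nonneg hab' hf01 hω hδ.le
  have hcnb : nn * (a:ℝ) ≤ c := by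
    rw [hnndef, hcdef]; exact_mod_cast hk.1
  have hcnb2 : c + 1 ≤ nn * (b:ℝ) := by
    have h2 : k + 1 ≤ (n:ℤ) * b := by linarith [hk.2]
    rw [hnndef, hcdef]; exact_mod_cast h2
  have hzmem : c/nn ∈ Set.Icc (a:ℝ) (b:ℝ) := by
    constructor
    · rw [le_div_iff₀ hnn]; nlinarith
    · rw [div_le_iff₀ hnn]; nlinarith
  set g : ℝ → ℝ := fun t => χ (nn * t - c) with hgdef
  have hgint : Integrable g := (hχint.comp_sub_right c).comp_mul_left' (ne_of_gt hnn)
  have hg0 : ∀ t, 0 ≤ g t := fun t => hχ0 _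
  have hgii : IntervalIntegrable g volume (a:ℝ) (b:ℝ) := hgint.intervalIntegrable
  set J0 : ℝ := ∫ t in (a:ℝ)..(b:ℝ), g t with hJ0def
  set J1 : ℝ := ∫ t in (a:ℝ)..(b:ℝ), g t * f t with hJ1def
  have hJ0low : A0 / nn ≤ J0 := by
    have hsub : ∫ t in (c/nn)..((c+1)/nn), g t ≤ J0 := by
      apply intervalIntegral.integral_mono_interval hzmem.1
        (by rw [div_le_div_iff₀ hnn hnn]; nlinarith)
        (by rw [div_le_iff₀ hnn]; nlinarith)
        (Filter.Eventually.of_forall hg0) hgii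
    have hceq : ∫ t in (c/nn)..((c+1)/nn), g t = nn⁻¹ * A0 := by
      rw [hgdef]
      rw [intervalIntegral.integral_comp_mul_sub χ (ne_of_gt hnn) c, smul_eq_mul]
      congr 1
      all_goals field_simp
      rw [hA0def, show c * (1 - 1) = (0:ℝ) by ring, show c + 1 - c = (1:ℝ) by ring]
    rw [div_eq_inv_mul] at *
    linarith [hsub, hceq]
  have hJ0pos : 0 < J0 := lt_of_lt_of_le (by positivity) hJ0low
  -- pointwise bound
  have hpoint : ∀ t ∈ Set.Icc (a:ℝ) (b:ℝ),
      |f t - f x| ≤ ω δ + (1 + |t - c/nn|/Δ) * ω Δ := by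
    intro t ht
    have h1 : |f t - f (c/nn)| ≤ (1 + |t - c/nn|/Δ) * ω Δ :=
      omega_chain hab' hf01 hω ht hzmem hΔ
    have h2 : |f (c/nn) - f x| ≤ ω δ := by
      apply omega_mem_le hf01 hω hzmem hx
      have he : c/nn - x = (c - nn*x)/nn := by field_simp
      rw [he, abs_div, abs_of_pos hnn, div_le_iff₀ hnn]
      rw [abs_sub_comm] at hnear
      calc |c - nn * x| ≤ nn * δ := hnear
        _ = δ * nn := by ring
    calc |f t - f x| ≤ |f t - f (c/nn)| + |f (c/nn) - f x| := by
          rw [show f t - f x = (f t - f (c/nn)) + (f (c/nn) - f x) by ring]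
          exact abs_add_le _ _
      _ ≤ (1 + |t - c/nn|/Δ) * ω Δ + ω δ := add_le_add h1 h2
      _ = ω δ + (1 + |t - c/nn|/Δ) * ω Δ := by ring
  -- the comparison function H
  set H : ℝ → ℝ := fun u => χ u + (χ u * |u|) * (nn*Δ)⁻¹ with hHdef
  have hH0 : ∀ u, 0 ≤ H u := fun u =>
    add_nonneg (hχ0 u) (mul_nonneg (mul_nonneg (hχ0 u) (abs_nonneg u)) (by positivity))
  have hHint : Integrable H := hχint.add (hM1.mul_const _)
  have hHeq : ∀ t : ℝ, g t * (1 + |t - c/nn|/Δ) = H (nn*t - c) := by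
    intro t
    have habs : |t - c/nn| = |nn*t - c| / nn := by
      rw [show t - c/nn = (nn*t - c)/nn by
          rw [eq_div_iff (ne_of_gt hnn), sub_mul, div_mul_cancel₀ _ (ne_of_gt hnn)]; ring,
        abs_div, abs_of_pos hnn]
    simp only [hgdef, hHdef, habs]
    rw [div_div]
    ring
  have hHcint : Integrable (fun t => H (nn*t - c)) :=
    (hHint.comp_sub_right c).comp_mul_left' (ne_of_gt hnn)
  have hfii : IntervalIntegrable f volume (a:ℝ) (b:ℝ) :=
    (ContinuousOn.intervalIntegrable (by rwa [Set.uIcc_of_le hab']))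
  have hgfii : IntervalIntegrable (fun t => g t * f t) volume (a:ℝ) (b:ℝ) := by
    rw [intervalIntegrable_iff_integrableOn_Ioc_of_le hab'] at hfii ⊢
    exact hfii.bdd_mul hgint.aestronglyMeasurable.restrict (c := M)
      (Filter.Eventually.of_forall fun t => by rw [Real.norm_eq_abs, abs_of_nonneg (hg0 t)]; exact hM _)
  have hgfxii : IntervalIntegrable (fun t => g t * f x) volume (a:ℝ) (b:ℝ) :=
    hgii.mul_const (f x)
  have hsubii : IntervalIntegrable (fun t => g t * f t - g t * f x) volume (a:ℝ) (b:ℝ) :=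
    hgfii.sub hgfxii
  have hgB1ii : IntervalIntegrable (fun t => ω δ * g t + ω Δ * H (nn*t - c)) volume (a:ℝ) (b:ℝ) :=
    (hgii.const_mul _).add ((hHcint.intervalIntegrable).const_mul _)
  have hnum : |J1 - f x * J0| ≤ ω δ * J0 + ω Δ * ∫ t in (a:ℝ)..(b:ℝ), H (nn*t - c) := by
    have e1 : J1 - f x * J0 = ∫ t in (a:ℝ)..(b:ℝ), (g t * f t - g t * f x) := by
      rw [intervalIntegral.integral_sub hgfii hgfxii, intervalIntegral.integral_mul_const]
      rw [hJ1def, hJ0def]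
      ring
    rw [e1]
    calc |∫ t in (a:ℝ)..(b:ℝ), (g t * f t - g t * f x)|
        ≤ ∫ t in (a:ℝ)..(b:ℝ), |g t * f t - g t * f x| :=
          intervalIntegral.abs_integral_le_integral_abs hab'
      _ ≤ ∫ t in (a:ℝ)..(b:ℝ), (ω δ * g t + ω Δ * H (nn*t - c)) := by
          apply intervalIntegral.integral_mono_on hab' hsubii.abs hgB1ii
          intro t ht
          have h3 : |g t * f t - g t * f x| = g t * |f t - f x| := by
            rw [← mul_sub, abs_mul, abs_of_nonneg (hg0 t)]
          rw [h3, ← hHeq t]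
          calc g t * |f t - f x| ≤ g t * (ω δ + (1 + |t - c/nn|/Δ) * ω Δ) :=
                mul_le_mul_of_nonneg_left (hpoint t ht) (hg0 t)
            _ = ω δ * g t + ω Δ * (g t * (1 + |t - c/nn|/Δ)) := by ring
      _ = ω δ * J0 + ω Δ * ∫ t in (a:ℝ)..(b:ℝ), H (nn*t - c) := by
          rw [intervalIntegral.integral_add (hgii.const_mul _)
            ((hHcint.intervalIntegrable).const_mul _),
            intervalIntegral.integral_const_mul, intervalIntegral.integral_const_mul]
  have hIH : ∫ t in (a:ℝ)..(b:ℝ), H (nn*t - c) ≤ nn⁻¹ * C := by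
    have h1 : ∫ t in (a:ℝ)..(b:ℝ), H (nn*t - c) ≤ ∫ t : ℝ, H (nn*t - c) := by
      rw [intervalIntegral.integral_of_le hab']
      exact setIntegral_le_integral hHcint (Filter.Eventually.of_forall (fun t => hH0 _))
    have h2 : ∫ t : ℝ, H (nn*t - c) = nn⁻¹ * ∫ u, H u := by
      have hcm := MeasureTheory.Measure.integral_comp_mul_left (fun y => H (y - c)) nn
      simp only [smul_eq_mul] at hcm
      rw [show (fun t : ℝ => H (nn * t - c)) = (fun t : ℝ => (fun y => H (y - c)) (nn * t))
        from rfl, hcm, integral_sub_right_eq_self, abs_of_pos (inv_pos.mpr hnn)]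
    have h3 : ∫ u, H u = C := by
      rw [hHdef, hCdef]
      rw [integral_add hχint (hM1.mul_const _), integral_mul_const]
      rw [hK1def, hK2def, div_eq_mul_inv]
    calc ∫ t in (a:ℝ)..(b:ℝ), H (nn*t - c) ≤ ∫ t : ℝ, H (nn*t - c) := h1
      _ = nn⁻¹ * C := by rw [h2, h3]
  -- conclude
  have e : J1 / J0 - f x = (J1 - f x * J0)/J0 := by
    field_simp
  rw [e, abs_div, abs_of_pos hJ0pos]
  have hnum' : |J1 - f x * J0| ≤ ω δ * J0 + ω Δ * (nn⁻¹ * C) :=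
    hnum.trans (add_le_add_right (mul_le_mul_of_nonneg_left hIH hωΔ0) _)
  have h5 : nn⁻¹ * C / J0 ≤ C / A0 := by
    rw [div_le_div_iff₀ hJ0pos hA]
    have h6 : C * (A0/nn) ≤ C * J0 := mul_le_mul_of_nonneg_left hJ0low hC0
    calc nn⁻¹ * C * A0 = C * (A0/nn) := by ring
      _ ≤ C * J0 := h6
  calc |J1 - f x * J0| / J0 ≤ (ω δ * J0 + ω Δ * (nn⁻¹ * C)) / J0 :=
        (div_le_div_iff_of_pos_right hJ0pos).mpr hnum'
    _ = ω δ + ω Δ * (nn⁻¹ * C / J0) := by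
        rw [add_div, mul_div_assoc, mul_div_assoc, div_self (ne_of_gt hJ0pos), mul_one]
    _ ≤ ω δ + ω Δ * (C / A0) := by
        apply add_le_add_right
        exact mul_le_mul_of_nonneg_left h5 hωΔ0
    _ = (ω Δ / A0) * C + ω δ := by ring


theorem Dmm_quantitative_estimate (χ σ : ℝ → ℝ) (α : ℝ) (hα : 0 < α)
    (hχ0 : ∀ t, 0 ≤ χ t) (hχbdd : ∃ M, ∀ t, χ t ≤ M) (hχint : Integrable χ)
    (hA : 0 < ∫ u in (0:ℝ)..1, χ u)
    (hM0 : ∃ M : ℝ, ∀ t : ℝ, ∀ s : Finset ℤ, ∑ k ∈ s, χ (t - (k : ℝ)) ≤ M)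
    (hmono : Monotone σ)
    (hbot : Filter.Tendsto σ Filter.atBot (nhds 0))
    (htop : Filter.Tendsto σ Filter.atTop (nhds 1))
    (h31 : σ 1 < σ 3)
    (hodd : ∀ x : ℝ, σ (-x) - 1/2 = -(σ x - 1/2))
    (hC2 : ContDiff ℝ 2 σ) (hconc : ConcaveOn ℝ (Set.Ici 0) σ)
    (hdecay : ∃ C B : ℝ, 0 < C ∧ 0 < B ∧ ∀ x : ℝ, x ≤ -B → σ x ≤ C * |x| ^ (-(1 + α)))
    (hM1 : Integrable (fun u : ℝ => χ u * |u|))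
    (hmfin : BddAbove {v : ℝ | ∃ (x : ℝ) (k : ℤ), v = phiSigma σ (x - (k : ℝ)) * |x - (k : ℝ)| ^ (1 + α)})
    (a b : ℤ) (hab : a < b)
    (f : ℝ → ℝ) (hcont : ContinuousOn f (Set.Icc (a:ℝ) (b:ℝ)))
    (hf01 : ∀ t ∈ Set.Icc (a:ℝ) (b:ℝ), f t ∈ Set.Icc (0:ℝ) 1)
    (ω : ℝ → ℝ)
    (hω : ∀ δ : ℝ, ω δ = sSup {v : ℝ | ∃ x ∈ Set.Icc (a:ℝ) (b:ℝ), ∃ y ∈ Set.Icc (a:ℝ) (b:ℝ),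
        |x - y| ≤ δ ∧ v = |f x - f y|})
    (δseq Δseq : ℕ → ℝ) (hδpos : ∀ n, 0 < δseq n) (hΔpos : ∀ n, 0 < Δseq n)
    (hδ0 : Filter.Tendsto δseq Filter.atTop (nhds 0))
    (hΔ0 : Filter.Tendsto Δseq Filter.atTop (nhds 0))
    (hnδ : Filter.Tendsto (fun n : ℕ => 1 / ((n : ℝ) * δseq n)) Filter.atTop (nhds 0))
    (hnΔ : Filter.Tendsto (fun n : ℕ => 1 / ((n : ℝ) * Δseq n)) Filter.atTop (nhds 0)) :
    ∀ n : ℕ, 0 < n →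
      (⨆ x : Set.Icc (a:ℝ) (b:ℝ), |Dmm χ σ a b n f x - f x|) ≤
        (ω (Δseq n) / ∫ u in (0:ℝ)..1, χ u) *
            ((∫ u : ℝ, χ u) + (∫ u : ℝ, χ u * |u|) / ((n : ℝ) * Δseq n)) +
          max
            (sSup {v : ℝ | ∃ (x : ℝ) (k : ℤ), v = phiSigma σ (x - (k : ℝ)) * |x - (k : ℝ)| ^ (1 + α)} /
              (phiSigma σ 2 * ((n : ℝ) * δseq n) ^ (1 + α)))
            (ω (δseq n)) := by
  intro n hn
  have hab' : (a:ℝ) ≤ (b:ℝ) := by exact_mod_cast hab.le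
  have hnn : (0:ℝ) < (n:ℝ) := by exact_mod_cast hn
  have h1α : (0:ℝ) < 1 + α := by linarith
  set A0 : ℝ := ∫ u in (0:ℝ)..1, χ u with hA0def
  set K1 : ℝ := ∫ u : ℝ, χ u with hK1def
  set K2 : ℝ := ∫ u : ℝ, χ u * |u| with hK2def
  set m : ℝ := sSup {v : ℝ | ∃ (x : ℝ) (k : ℤ),
      v = phiSigma σ (x - (k : ℝ)) * |x - (k : ℝ)| ^ (1 + α)} with hmdef
  have hφ2 : 0 < phiSigma σ 2 := phi_two_pos h31
  have hK10 : 0 ≤ K1 := integral_nonneg hχ0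
  have hK20 : 0 ≤ K2 := integral_nonneg (fun u => mul_nonneg (hχ0 u) (abs_nonneg u))
  have hωΔ0 : 0 ≤ ω (Δseq n) := omega_nonneg hab' hf01 hω (hΔpos n).le
  have hωδ0 : 0 ≤ ω (δseq n) := omega_nonneg hab' hf01 hω (hδpos n).le
  have hnδpos : (0:ℝ) < (n:ℝ) * δseq n := by
    have := hδpos n; positivity
  have hnΔpos : (0:ℝ) < (n:ℝ) * Δseq n := by
    have := hΔpos n; positivity
  have hm2 : phiSigma σ 2 * (2:ℝ) ^ (1 + α) ≤ m := by
    apply le_csSup hmfin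
    refine ⟨2, 0, ?_⟩
    norm_num
  have hm0 : 0 ≤ m := le_trans (by positivity) hm2
  have hmub : ∀ y : ℝ, phiSigma σ y * |y| ^ (1 + α) ≤ m := by
    intro y
    apply le_csSup hmfin
    exact ⟨y, 0, by norm_num⟩
  set mt : ℝ := m / (phiSigma σ 2 * ((n:ℝ) * δseq n) ^ (1 + α)) with hmtdef
  have hmt0 : 0 ≤ mt := div_nonneg hm0 (by positivity)
  set T1 : ℝ := (ω (Δseq n) / A0) * (K1 + K2 / ((n:ℝ) * Δseq n)) with hT1def
  have hT10 : 0 ≤ T1 :=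
    mul_nonneg (div_nonneg hωΔ0 hA.le)
      (add_nonneg hK10 (div_nonneg hK20 hnΔpos.le))
  haveI : Nonempty (Set.Icc (a:ℝ) (b:ℝ)) :=
    Set.Nonempty.to_subtype (Set.nonempty_Icc.mpr hab')
  apply ciSup_le
  rintro ⟨x, hx⟩
  show |Dmm χ σ a b n f x - f x| ≤ T1 + max mt (ω (δseq n))
  have hfx0 : 0 ≤ f x := (hf01 x hx).1
  have hfx1 : f x ≤ 1 := (hf01 x hx).2
  simp only [Dmm]
  set Kset : Set ℤ := Set.Icc ((n:ℤ) * a) ((n:ℤ) * b - 1) with hKdef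
  have hKfin : Kset.Finite := Set.finite_Icc _ _
  have hn1 : (1:ℤ) ≤ (n:ℤ) := by exact_mod_cast hn
  have hKne : Kset.Nonempty := by
    rw [hKdef]
    apply Set.nonempty_Icc.mpr
    nlinarith [hab]
  set S : ℝ := sSup ((fun d : ℤ => phiSigma σ ((n:ℝ) * x - (d : ℝ))) '' Kset) with hSdef
  have hSbdd : BddAbove ((fun d : ℤ => phiSigma σ ((n:ℝ) * x - (d : ℝ))) '' Kset) :=
    (hKfin.image _).bddAbove
  have hSub : ∀ k ∈ Kset, phiSigma σ ((n:ℝ) * x - (k : ℝ)) ≤ S := fun k hk =>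
    le_csSup hSbdd ⟨k, hk, rfl⟩
  -- the point d0 near n x
  set d0 : ℤ := max ((n:ℤ) * a) (min ⌊(n:ℝ) * x⌋ ((n:ℤ) * b - 1)) with hd0def
  have hxa : (n:ℝ) * (a:ℝ) ≤ (n:ℝ) * x := mul_le_mul_of_nonneg_left hx.1 hnn.le
  have hxb : (n:ℝ) * x ≤ (n:ℝ) * (b:ℝ) := mul_le_mul_of_nonneg_left hx.2 hnn.le
  have hfl : ((n:ℤ) * a : ℤ) ≤ ⌊(n:ℝ) * x⌋ := by
    apply Int.le_floor.mpr
    push_cast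
    linarith
  have hd0mem : d0 ∈ Kset := by
    rw [hKdef, hd0def]
    constructor
    · exact le_max_left _ _
    · apply max_le
      · nlinarith [hab]
      · exact min_le_right _ _
  have hd0c : |(n:ℝ) * x - (d0:ℝ)| ≤ 2 := by
    have hfl' : d0 ≤ ⌊(n:ℝ) * x⌋ := by
      rw [hd0def]
      exact max_le hfl (min_le_left _ _)
    have h1 : (d0:ℝ) ≤ (n:ℝ) * x :=
      le_trans (by exact_mod_cast hfl') (Int.floor_le _)
    have h2 : (n:ℝ) * x - 2 ≤ (d0:ℝ) := by
      have hmin : min (⌊(n:ℝ) * x⌋ : ℤ) ((n:ℤ) * b - 1) ≤ d0 := by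
        rw [hd0def]; exact le_max_right _ _
      have hfloor : (n:ℝ) * x - 1 < ((⌊(n:ℝ) * x⌋ : ℤ) : ℝ) := Int.sub_one_lt_floor _
      have hnb : (n:ℝ) * x - 1 ≤ (((n:ℤ) * b - 1 : ℤ) : ℝ) := by
        push_cast
        linarith
      have : (n:ℝ) * x - 2 ≤ ((min (⌊(n:ℝ) * x⌋ : ℤ) ((n:ℤ) * b - 1) : ℤ) : ℝ) := by
        rcases min_cases (⌊(n:ℝ) * x⌋ : ℤ) ((n:ℤ) * b - 1) with ⟨hmeq, -⟩ | ⟨hmeq, -⟩ <;>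
          rw [hmeq] <;> linarith
      calc (n:ℝ) * x - 2 ≤ _ := this
        _ ≤ (d0:ℝ) := by exact_mod_cast hmin
    rw [abs_le]
    constructor <;> linarith
  have hSge : phiSigma σ 2 ≤ S :=
    le_trans (phi_ge_two hconc hodd hd0c) (hSub d0 hd0mem)
  have hSpos : 0 < S := lt_of_lt_of_le hφ2 hSge
  set Q : ℤ → ℝ := fun k : ℤ =>
      min ((∫ t in (a:ℝ)..(b:ℝ), χ ((n : ℝ) * t - (k : ℝ)) * f t) /
            (∫ t in (a:ℝ)..(b:ℝ), χ ((n : ℝ) * t - (k : ℝ))))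
        (phiSigma σ ((n : ℝ) * x - (k : ℝ)) / S) with hQdef
  have hQbdd : BddAbove (Q '' Kset) := (hKfin.image _).bddAbove
  have hQne : (Q '' Kset).Nonempty := hKne.image _
  -- basic bounds on the pieces
  have hAk0 : ∀ k : ℤ, 0 ≤ (∫ t in (a:ℝ)..(b:ℝ), χ ((n : ℝ) * t - (k : ℝ)) * f t) /
      (∫ t in (a:ℝ)..(b:ℝ), χ ((n : ℝ) * t - (k : ℝ))) := by
    intro k
    apply div_nonneg
    · apply intervalIntegral.integral_nonneg hab'
      intro u hu
      exact mul_nonneg (hχ0 _) (hf01 u hu).1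
    · apply intervalIntegral.integral_nonneg hab'
      intro u hu
      exact hχ0 _
  have hΦ0 : ∀ k : ℤ, 0 ≤ phiSigma σ ((n : ℝ) * x - (k : ℝ)) / S := fun k =>
    div_nonneg (phi_nonneg hmono _) hSpos.le
  have hΦ1 : ∀ k ∈ Kset, phiSigma σ ((n : ℝ) * x - (k : ℝ)) / S ≤ 1 := fun k hk =>
    (div_le_one hSpos).mpr (hSub k hk)
  have hD1 : sSup (Q '' Kset) ≤ 1 := by
    apply csSup_le hQne
    rintro v ⟨k, hk, rfl⟩
    exact le_trans (min_le_right _ _) (hΦ1 k hk)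
  have hD0 : 0 ≤ sSup (Q '' Kset) := by
    apply le_trans _ (le_csSup hQbdd ⟨d0, hd0mem, rfl⟩)
    exact le_min (hAk0 d0) (hΦ0 d0)
  rcases lt_or_ge ((n:ℝ) * δseq n) 2 with hc | hc
  · -- trivial case : n δ < 2, so mt ≥ 1 and |D - f x| ≤ 1
    have h1mt : 1 ≤ mt := by
      rw [hmtdef, le_div_iff₀ (by positivity), one_mul]
      calc phiSigma σ 2 * ((n:ℝ) * δseq n) ^ (1 + α)
          ≤ phiSigma σ 2 * (2:ℝ) ^ (1 + α) := by
            apply mul_le_mul_of_nonneg_left _ hφ2.le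
            exact Real.rpow_le_rpow hnδpos.le hc.le h1α.le
        _ ≤ m := hm2
    have habs : |sSup (Q '' Kset) - f x| ≤ 1 := by
      rw [abs_le]
      constructor <;> [linarith; linarith]
    calc |sSup (Q '' Kset) - f x| ≤ 1 := habs
      _ ≤ mt := h1mt
      _ ≤ max mt (ω (δseq n)) := le_max_left _ _
      _ ≤ T1 + max mt (ω (δseq n)) := le_add_of_nonneg_left hT10
  · -- main case : 2 ≤ n δ
    have hnear : ∀ k ∈ Kset, |(n:ℝ) * x - (k:ℝ)| ≤ (n:ℝ) * δseq n →
        |(∫ t in (a:ℝ)..(b:ℝ), χ ((n : ℝ) * t - (k : ℝ)) * f t) /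
            (∫ t in (a:ℝ)..(b:ℝ), χ ((n : ℝ) * t - (k : ℝ))) - f x| ≤ T1 + ω (δseq n) := by
      intro k hk hkc
      have := near_bound χ hχ0 ⟨_, fun t => (hχbdd.choose_spec t)⟩ hχint hA hM1 a b hab f
        hcont hf01 ω hω n hn (Δseq n) (δseq n) (hΔpos n) (hδpos n) x hx k hk hkc
      exact this
    have hfar : ∀ k : ℤ, (n:ℝ) * δseq n ≤ |(n:ℝ) * x - (k:ℝ)| →
        phiSigma σ ((n : ℝ) * x - (k : ℝ)) / S ≤ mt := by
      intro k hkc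
      have hyabs : (0:ℝ) < |(n:ℝ) * x - (k:ℝ)| := lt_of_lt_of_le hnδpos hkc
      have hpow : ((n:ℝ) * δseq n) ^ (1 + α) ≤ |(n:ℝ) * x - (k:ℝ)| ^ (1 + α) :=
        Real.rpow_le_rpow hnδpos.le hkc h1α.le
      have hpowpos : (0:ℝ) < |(n:ℝ) * x - (k:ℝ)| ^ (1 + α) := Real.rpow_pos_of_pos hyabs _
      have hphi_le : phiSigma σ ((n : ℝ) * x - (k : ℝ)) ≤ m / ((n:ℝ) * δseq n) ^ (1 + α) := by
        rw [le_div_iff₀ (by positivity)]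
        calc phiSigma σ ((n : ℝ) * x - (k : ℝ)) * ((n:ℝ) * δseq n) ^ (1 + α)
            ≤ phiSigma σ ((n : ℝ) * x - (k : ℝ)) * |(n:ℝ) * x - (k:ℝ)| ^ (1 + α) :=
              mul_le_mul_of_nonneg_left hpow (phi_nonneg hmono _)
          _ ≤ m := hmub _
      calc phiSigma σ ((n : ℝ) * x - (k : ℝ)) / S
          ≤ phiSigma σ ((n : ℝ) * x - (k : ℝ)) / phiSigma σ 2 :=
            div_le_div_of_nonneg_left (phi_nonneg hmono _) hφ2 hSge
        _ ≤ (m / ((n:ℝ) * δseq n) ^ (1 + α)) / phiSigma σ 2 :=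
            (div_le_div_iff_of_pos_right hφ2).mpr hphi_le
        _ = mt := by rw [hmtdef, div_div]; ring_nf
    have hupper : sSup (Q '' Kset) ≤ f x + (T1 + max mt (ω (δseq n))) := by
      apply csSup_le hQne
      rintro v ⟨k, hk, rfl⟩
      rcases le_or_gt |(n:ℝ) * x - (k:ℝ)| ((n:ℝ) * δseq n) with hnc | hnc
      · have h1 := hnear k hk hnc
        have h2 : Q k ≤ (∫ t in (a:ℝ)..(b:ℝ), χ ((n : ℝ) * t - (k : ℝ)) * f t) /
            (∫ t in (a:ℝ)..(b:ℝ), χ ((n : ℝ) * t - (k : ℝ))) := min_le_left _ _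
        have h3 := abs_le.mp h1
        have h4 : ω (δseq n) ≤ max mt (ω (δseq n)) := le_max_right _ _
        calc Q k ≤ _ := h2
          _ ≤ f x + (T1 + ω (δseq n)) := by linarith [h3.2]
          _ ≤ f x + (T1 + max mt (ω (δseq n))) := by linarith
      · have h1 := hfar k hnc.le
        calc Q k ≤ phiSigma σ ((n : ℝ) * x - (k : ℝ)) / S := min_le_right _ _
          _ ≤ mt := h1
          _ ≤ f x + (T1 + max mt (ω (δseq n))) := by
              have := le_max_left mt (ω (δseq n))
              linarith
    have hlower : f x ≤ sSup (Q '' Kset) + (T1 + max mt (ω (δseq n))) := by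
      -- find an index where the phi-ratio equals 1 and which is close to n x
      obtain ⟨k1, hk1mem, hk1eq⟩ : ∃ k1 ∈ Kset,
          phiSigma σ ((n:ℝ) * x - (k1 : ℝ)) = S := by
        have hmem := Set.Nonempty.csSup_mem
          (hKne.image (fun d : ℤ => phiSigma σ ((n:ℝ) * x - (d : ℝ))))
          (hKfin.image (fun d : ℤ => phiSigma σ ((n:ℝ) * x - (d : ℝ))))
        rw [← hSdef] at hmem
        obtain ⟨k1, hk1, hk1e⟩ := hmem
        exact ⟨k1, hk1, by simpa using hk1e⟩
      obtain ⟨k0, hk0mem, hk0eq, hk0c⟩ : ∃ k0 ∈ Kset,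
          phiSigma σ ((n:ℝ) * x - (k0 : ℝ)) = S ∧ |(n:ℝ) * x - (k0:ℝ)| ≤ 2 := by
        rcases le_or_gt |(n:ℝ) * x - (k1:ℝ)| 2 with h | h
        · exact ⟨k1, hk1mem, hk1eq, h⟩
        · refine ⟨d0, hd0mem, ?_, hd0c⟩
          apply le_antisymm (hSub d0 hd0mem)
          calc S = phiSigma σ ((n:ℝ) * x - (k1 : ℝ)) := hk1eq.symm
            _ ≤ phiSigma σ 2 := phi_le_two hconc hodd h.le
            _ ≤ phiSigma σ ((n:ℝ) * x - (d0 : ℝ)) := phi_ge_two hconc hodd hd0c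
      have hΦk0 : phiSigma σ ((n:ℝ) * x - (k0 : ℝ)) / S = 1 := by
        rw [hk0eq]; exact div_self hSpos.ne'
      have hnear0 := hnear k0 hk0mem (le_trans hk0c hc)
      have h5 := (abs_le.mp hnear0).1
      set Ak := (∫ t in (a:ℝ)..(b:ℝ), χ ((n : ℝ) * t - (k0 : ℝ)) * f t) /
          (∫ t in (a:ℝ)..(b:ℝ), χ ((n : ℝ) * t - (k0 : ℝ))) with hAkdef
      have hfxAk : f x ≤ Ak + (T1 + ω (δseq n)) := by linarith
      have hQk0 : Q k0 = min Ak 1 := by rw [hQdef]; simp only; rw [hΦk0]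
      have hQD : Q k0 ≤ sSup (Q '' Kset) := le_csSup hQbdd ⟨k0, hk0mem, rfl⟩
      have h4 : ω (δseq n) ≤ max mt (ω (δseq n)) := le_max_right _ _
      rcases le_total Ak 1 with hm1 | hm1
      · rw [min_eq_left hm1] at hQk0
        linarith [hQk0 ▸ hQD]
      · rw [min_eq_right hm1] at hQk0
        have : (1:ℝ) ≤ sSup (Q '' Kset) := hQk0 ▸ hQD
        linarith
    rw [abs_le]
    constructor
    · linarith
    · linarith
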